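/- Let G be a group and suppose there exists r ≥ 1 such that every finite subgroup of G has order at most r. Then every infinite virtually cyclic subgroup K of G contains an infinite cyclic subgroup C with index |K : C| ≤ 2r. -/

import Mathlib

open Subgroup
open scoped commutatorElement

section Aux

variable {H : Type*} [Group H]

private lemma isCyclic_zpowers' (g : H) : IsCyclic (Subgroup.zpowers g) := by
  refine ⟨⟨⟨g, Subgroup.mem_zpowers g⟩, ?_⟩⟩
  rintro ⟨x, hx⟩
  obtain ⟨n, hn⟩ := Subgroup.mem_zpowers_iff.mp hx
  exact ⟨n, Subtype.ext (by rw [SubgroupClass.coe_zpow]; exact hn)⟩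

private lemma isOfFinOrder_of_mem_finite {S : Subgroup H} (hS : Finite S) {x : H}
    (hx : x ∈ S) : IsOfFinOrder x := by
  have h1 : IsOfFinOrder (⟨x, hx⟩ : S) := by
    rw [← orderOf_pos_iff]
    exact orderOf_pos _
  obtain ⟨n, hn, h⟩ := isOfFinOrder_iff_pow_eq_one.mp h1
  refine isOfFinOrder_iff_pow_eq_one.mpr ⟨n, hn, ?_⟩
  have := congrArg (Subtype.val) h
  simpa using this

private lemma commutator_mul_center (g h z w : H) (hz : z ∈ Subgroup.center H)
    (hw : w ∈ Subgroup.center H) : ⁅g * z, h * w⁆ = ⁅g, h⁆ := by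
  have hz' := Subgroup.mem_center_iff.mp hz
  have hw' := Subgroup.mem_center_iff.mp hw
  simp only [commutatorElement_def, mul_inv_rev]
  calc g * z * (h * w) * (z⁻¹ * g⁻¹) * (w⁻¹ * h⁻¹)
      = g * (z * (h * w) * z⁻¹) * g⁻¹ * w⁻¹ * h⁻¹ := by group
    _ = g * ((h * w) * z * z⁻¹) * g⁻¹ * w⁻¹ * h⁻¹ := by rw [← hz' (h * w)]
    _ = g * h * (w * g⁻¹) * w⁻¹ * h⁻¹ := by group
    _ = g * h * (g⁻¹ * w) * w⁻¹ * h⁻¹ := by rw [hw' g⁻¹]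
    _ = g * h * g⁻¹ * h⁻¹ := by group

private lemma finite_commutatorSet_of_center [Finite (H ⧸ Subgroup.center H)] :
    Finite (commutatorSet H) := by
  set Z := Subgroup.center H
  let f : (H ⧸ Z) × (H ⧸ Z) → H := fun p => ⁅p.1.out, p.2.out⁆
  have hsub : commutatorSet H ⊆ Set.range f := by
    rintro g ⟨g₁, g₂, rfl⟩
    refine ⟨(QuotientGroup.mk g₁, QuotientGroup.mk g₂), ?_⟩
    obtain ⟨z₁, hz₁⟩ := QuotientGroup.mk_out_eq_mul Z g₁
    obtain ⟨z₂, hz₂⟩ := QuotientGroup.mk_out_eq_mul Z g₂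
    show ⁅(QuotientGroup.mk g₁ : H ⧸ Z).out, (QuotientGroup.mk g₂ : H ⧸ Z).out⁆ = _
    rw [hz₁, hz₂, commutator_mul_center g₁ g₂ z₁ z₂ z₁.2 z₂.2]
  exact ((Set.finite_range f).subset hsub).to_subtype

end Aux

private lemma key_lemma {H : Type*} [Group H] [Infinite H] (r : ℕ)
    (hb : ∀ T : Subgroup H, Finite T → Nat.card T ≤ r)
    (c : H) (hc : (Subgroup.zpowers c).index ≠ 0) :
    ∃ k : H, (Subgroup.zpowers k).index ≠ 0 ∧ (Subgroup.zpowers k).index ≤ 2 * r := by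
  classical
  haveI : (Subgroup.zpowers c).FiniteIndex := ⟨hc⟩
  set N := (Subgroup.zpowers c).normalCore with hN
  haveI : N.FiniteIndex := Subgroup.finiteIndex_normalCore _
  haveI : N.Normal := Subgroup.normalCore_normal _
  -- N is infinite
  haveI : Infinite N := by
    by_contra hfin
    rw [not_infinite_iff_finite] at hfin
    haveI := hfin
    haveI : Finite H := Finite.of_equiv ((H ⧸ N) × N) (Subgroup.groupEquivQuotientProdSubgroup (s := N)).symm
    exact not_finite H
  -- N is cyclic, get a generator a
  haveI : IsCyclic (Subgroup.zpowers c) := isCyclic_zpowers' c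
  haveI : IsCyclic N := Subgroup.isCyclic_of_le (Subgroup.normalCore_le _)
  obtain ⟨g, hg⟩ := IsCyclic.exists_generator (α := N)
  set a : H := (g : H) with ha
  have hNa : N = Subgroup.zpowers a := by
    apply le_antisymm
    · intro x hx
      obtain ⟨n, hn⟩ := hg ⟨x, hx⟩
      exact ⟨n, by simpa using congrArg Subtype.val hn⟩
    · rw [Subgroup.zpowers_le]; exact g.2
  have haN : a ∈ N := g.2
  -- a has infinite order
  have hafin : ¬ IsOfFinOrder a := by
    intro hfin
    have : Finite (Subgroup.zpowers a) := (finite_zpowers.mpr hfin).to_subtype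
    rw [← hNa] at this
    haveI := this
    exact not_finite (↥N)
    
  have hinj : Function.Injective fun n : ℤ => a ^ n :=
    injective_zpow_iff_not_isOfFinOrder.mpr hafin
  -- dichotomy: conjugation sends a to a or a⁻¹
  have hdich : ∀ t : H, t * a * t⁻¹ = a ∨ t * a * t⁻¹ = a⁻¹ := by
    intro t
    have hm1 : t * a * t⁻¹ ∈ Subgroup.zpowers a := by
      rw [← hNa]; exact Subgroup.Normal.conj_mem ‹N.Normal› a haN t
    have hm2 : t⁻¹ * a * t ∈ Subgroup.zpowers a := by
      rw [← hNa]
      simpa using Subgroup.Normal.conj_mem ‹N.Normal› a haN t⁻¹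
    obtain ⟨m, hm⟩ := Subgroup.mem_zpowers_iff.mp hm1
    obtain ⟨m', hm'⟩ := Subgroup.mem_zpowers_iff.mp hm2
    have hmm' : a ^ (m * m') = a ^ (1 : ℤ) := by
      rw [zpow_one, zpow_mul, hm]
      calc (t * a * t⁻¹) ^ m' = t * a ^ m' * t⁻¹ := by
            rw [conj_zpow]
        _ = t * (t⁻¹ * a * t) * t⁻¹ := by rw [hm']
        _ = a := by group
    have h1 : m * m' = 1 := hinj hmm'
    rcases Int.isUnit_iff.mp (IsUnit.of_mul_eq_one m' h1) with h | h
    · left; rw [← hm, h, zpow_one]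
    · right; rw [← hm, h]; simp
  set L := Subgroup.centralizer {a} with hL
  have haL : a ∈ L := Subgroup.mem_centralizer_singleton_iff.mpr rfl
  have hmemL : ∀ t : H, t ∈ L ↔ t * a * t⁻¹ = a := by
    intro t
    rw [Subgroup.mem_centralizer_singleton_iff]
    constructor
    · intro h; rw [h]; group
    · intro h
      have := congrArg (fun x => x * t) h
      simpa [mul_assoc] using this
  -- L has index at most 2
  have hLle : L.index ≤ 2 ∧ L.index ≠ 0 := by
    by_cases htop : ∀ t : H, t ∈ L
    · have : L = ⊤ := by ext x; simp [htop x]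
      rw [this, Subgroup.index_top]; exact ⟨by norm_num, one_ne_zero⟩
    · push_neg at htop
      obtain ⟨t₀, ht₀⟩ := htop
      have ht₀' : t₀ * a * t₀⁻¹ = a⁻¹ := (hdich t₀).resolve_left (fun h => ht₀ ((hmemL t₀).mpr h))
      have hsurj : Function.Surjective (fun i : Fin 2 =>
          if i = 0 then (QuotientGroup.mk (1 : H) : H ⧸ L) else QuotientGroup.mk t₀) := by
        intro q
        obtain ⟨x, rfl⟩ := QuotientGroup.mk_surjective q
        rcases hdich x with h | h
        · refine ⟨0, ?_⟩
          simp only [if_pos rfl]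
          exact (QuotientGroup.eq (s := L)).mpr (by simpa using (hmemL x).mpr h)
        · refine ⟨1, ?_⟩
          have h10 : (1 : Fin 2) ≠ 0 := by decide
          simp only [if_neg h10]
          refine (QuotientGroup.eq (s := L)).mpr ?_
          rw [hmemL]
          calc (t₀⁻¹ * x) * a * (t₀⁻¹ * x)⁻¹ = t₀⁻¹ * (x * a * x⁻¹) * t₀ := by group
            _ = t₀⁻¹ * (t₀ * a * t₀⁻¹) * t₀ := by rw [h, ← ht₀']
            _ = a := by group
      constructor
      · calc L.index = Nat.card (H ⧸ L) := rfl
          _ ≤ Nat.card (Fin 2) := Nat.card_le_card_of_surjective _ hsurj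
          _ = 2 := by simp
      · have : Finite (H ⧸ L) := Finite.of_surjective _ hsurj
        exact Subgroup.index_ne_zero_of_finite
  obtain ⟨hLle2, hLne⟩ := hLle
  have hNL : N ≤ L := by
    rw [hNa]
    intro x hx
    obtain ⟨n, hn⟩ := Subgroup.mem_zpowers_iff.mp hx
    rw [hL, Subgroup.mem_centralizer_singleton_iff, ← hn]
    exact ((Commute.refl a).zpow_left n).eq
  set a' : L := ⟨a, haL⟩ with ha'
  have hA : Subgroup.zpowers a' = N.subgroupOf L := by
    ext x
    simp only [Subgroup.mem_subgroupOf, hNa, Subgroup.mem_zpowers_iff]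
    constructor
    · rintro ⟨n, hn⟩
      exact ⟨n, by rw [← hn, SubgroupClass.coe_zpow]⟩
    · rintro ⟨n, hn⟩
      exact ⟨n, Subtype.ext (by rw [SubgroupClass.coe_zpow]; exact hn)⟩
  have hAindex : (Subgroup.zpowers a').index ≠ 0 := by
    rw [hA]
    have hrel := Subgroup.relIndex_mul_index hNL
    intro h0
    have : N.relIndex L = 0 := h0
    rw [this, zero_mul] at hrel
    exact (Subgroup.FiniteIndex.index_ne_zero : N.index ≠ 0) hrel.symm
  have hcent : Subgroup.zpowers a' ≤ Subgroup.center L := by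
    rw [Subgroup.zpowers_le, Subgroup.mem_center_iff]
    intro x
    exact Subtype.ext (Subgroup.mem_centralizer_singleton_iff.mp x.2)
  have hdvd := Subgroup.index_dvd_of_le hcent
  haveI : (Subgroup.center L).FiniteIndex :=
    ⟨fun h0 => hAindex (by rw [h0] at hdvd; exact Nat.eq_zero_of_zero_dvd hdvd)⟩
  haveI : Finite (L ⧸ Subgroup.center L) := inferInstance
  haveI : Finite (commutatorSet L) := finite_commutatorSet_of_center
  haveI hDfin : Finite (_root_.commutator L) := inferInstance
  -- the torsion subgroup of L
  have mul_mem_tors : ∀ {x y : ↥L}, IsOfFinOrder x → IsOfFinOrder y → IsOfFinOrder (x * y) := by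
    intro x y hx hy
    obtain ⟨m, hm, hxm⟩ := isOfFinOrder_iff_pow_eq_one.mp hx
    obtain ⟨n, hn, hyn⟩ := isOfFinOrder_iff_pow_eq_one.mp hy
    have hmem : (x * y) ^ (m * n) ∈ _root_.commutator L := by
      have key : (Abelianization.of ((x*y)^(m*n)) : Abelianization L) = 1 := by
        have hx1 : (Abelianization.of x) ^ (m*n) = 1 := by
          rw [← map_pow, pow_mul, hxm, one_pow, map_one]
        have hy1 : (Abelianization.of y) ^ (m*n) = 1 := by
          rw [← map_pow, mul_comm m n, pow_mul, hyn, one_pow, map_one]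
        rw [map_pow, map_mul, mul_pow, hx1, hy1, one_mul]
      exact (QuotientGroup.eq_one_iff (N := _root_.commutator (↥L)) ((x*y)^(m*n))).mp key
    obtain ⟨p, hp, hpp⟩ := isOfFinOrder_iff_pow_eq_one.mp
      (isOfFinOrder_of_mem_finite hDfin hmem)
    refine isOfFinOrder_iff_pow_eq_one.mpr ⟨m * n * p, by positivity, ?_⟩
    rw [pow_mul, hpp]
  let T : Subgroup ↥L :=
    { carrier := {x : ↥L | IsOfFinOrder x}
      one_mem' := IsOfFinOrder.one
      inv_mem' := fun hx => hx.inv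
      mul_mem' := fun hx hy => mul_mem_tors hx hy }
  have hTmem : ∀ x : ↥L, x ∈ T ↔ IsOfFinOrder x := fun x => Iff.rfl
  haveI hTnorm : T.Normal := by
    constructor
    intro x hx t
    obtain ⟨n, hn, h⟩ := isOfFinOrder_iff_pow_eq_one.mp hx
    refine isOfFinOrder_iff_pow_eq_one.mpr ⟨n, hn, ?_⟩
    rw [conj_pow, h]
    group
  haveI : (Subgroup.zpowers a').FiniteIndex := ⟨hAindex⟩
  have hTinj : Function.Injective
      (fun t : T => (QuotientGroup.mk (t : ↥L) : ↥L ⧸ Subgroup.zpowers a')) := by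
    intro t₁ t₂ h
    have h2 : (t₁ : ↥L)⁻¹ * t₂ ∈ Subgroup.zpowers a' :=
      (QuotientGroup.eq (s := Subgroup.zpowers a')).mp h
    obtain ⟨n, hn⟩ := Subgroup.mem_zpowers_iff.mp h2
    have htor : IsOfFinOrder ((t₁ : ↥L)⁻¹ * t₂) := mul_mem_tors (t₁.2.inv) t₂.2
    obtain ⟨p, hp, hpp⟩ := isOfFinOrder_iff_pow_eq_one.mp htor
    have e1 : a' ^ (n * (p:ℤ)) = 1 := by
      rw [zpow_mul, hn, zpow_natCast, hpp]
    have e2 : a ^ (n * (p:ℤ)) = a ^ (0:ℤ) := by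
      have := congrArg (fun z : ↥L => (z : H)) e1
      simpa [SubgroupClass.coe_zpow] using this
    have e3 : n * (p:ℤ) = 0 := hinj e2
    have e4 : n = 0 := by
      rcases mul_eq_zero.mp e3 with h' | h'
      · exact h'
      · exact absurd h' (by exact_mod_cast hp.ne')
    have e5 : (t₁ : ↥L)⁻¹ * t₂ = 1 := by rw [← hn, e4, zpow_zero]
    exact Subtype.ext (inv_mul_eq_one.mp e5)
  haveI hTfin : Finite T := Finite.of_injective _ hTinj
  have hTcard : Nat.card T ≤ r := by
    have e : Nat.card T = Nat.card (T.map L.subtype) :=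
      Nat.card_congr (Subgroup.equivMapOfInjective T L.subtype
        (Subgroup.subtype_injective L)).toEquiv
    rw [e]
    refine hb _ ?_
    exact Finite.of_equiv _ (Subgroup.equivMapOfInjective T L.subtype
      (Subgroup.subtype_injective L)).toEquiv
  -- the quotient of L by its torsion subgroup
  have hQcomm : ∀ u v : ↥L ⧸ T, u * v = v * u := by
    intro u v
    obtain ⟨x, rfl⟩ := QuotientGroup.mk_surjective u
    obtain ⟨y, rfl⟩ := QuotientGroup.mk_surjective v
    rw [← QuotientGroup.mk_mul, ← QuotientGroup.mk_mul]
    refine (QuotientGroup.eq (s := T)).mpr ?_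
    have e : (x*y)⁻¹ * (y*x) = ⁅y⁻¹, x⁻¹⁆ := by
      rw [commutatorElement_def]
      group
    rw [e]
    exact isOfFinOrder_of_mem_finite hDfin
      (Subgroup.commutator_mem_commutator (Subgroup.mem_top _) (Subgroup.mem_top _))
  set b : ↥L ⧸ T := QuotientGroup.mk a' with hb'
  set B := Subgroup.zpowers b with hB
  have hBindex : B.index ≠ 0 := by
    have hle3 : Subgroup.zpowers a' ≤ B.comap (QuotientGroup.mk' T) := by
      rw [Subgroup.zpowers_le, Subgroup.mem_comap]
      exact Subgroup.mem_zpowers b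
    have e1 : (B.comap (QuotientGroup.mk' T)).index = B.index :=
      Subgroup.index_comap_of_surjective B (QuotientGroup.mk'_surjective T)
    have e2 := Subgroup.index_dvd_of_le hle3
    rw [e1] at e2
    intro h0
    rw [h0] at e2
    exact hAindex (Nat.eq_zero_of_zero_dvd e2)
  haveI hBnorm : B.Normal := by
    constructor
    intro x hx g'
    rw [hQcomm g' x, mul_assoc, mul_inv_cancel, mul_one]
    exact hx
  haveI : B.FiniteIndex := ⟨hBindex⟩
  set n := B.index with hn'
  have hpow : ∀ x : ↥L ⧸ T, x ^ n ∈ B := fun x => Subgroup.pow_index_mem B x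
  have htf : ∀ x : ↥L ⧸ T, ∀ m : ℕ, m ≠ 0 → x ^ m = 1 → x = 1 := by
    intro x m hm h1
    obtain ⟨u, rfl⟩ := QuotientGroup.mk_surjective x
    have h2 : u ^ m ∈ T := by
      rw [← QuotientGroup.eq_one_iff (N := T), QuotientGroup.mk_pow]
      exact h1
    obtain ⟨p, hp, hpp⟩ := isOfFinOrder_iff_pow_eq_one.mp h2
    have h3 : IsOfFinOrder u := isOfFinOrder_iff_pow_eq_one.mpr
      ⟨m * p, Nat.mul_pos (Nat.pos_of_ne_zero hm) hp, by rw [pow_mul, hpp]⟩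
    exact (QuotientGroup.eq_one_iff u).mpr h3
  let ψ : (↥L ⧸ T) →* ↥B :=
    { toFun := fun x => ⟨x ^ n, hpow x⟩
      map_one' := Subtype.ext (one_pow n)
      map_mul' := fun x y => Subtype.ext (Commute.mul_pow (hQcomm x y) n) }
  have hψinj : Function.Injective ψ := by
    intro x y h
    have h1 : x ^ n = y ^ n := congrArg Subtype.val h
    have h2 : (x * y⁻¹) ^ n = 1 := by
      rw [Commute.mul_pow (hQcomm x y⁻¹), h1, inv_pow, mul_inv_cancel]
    exact mul_inv_eq_one.mp (htf _ n hBindex h2)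
  haveI : IsCyclic ↥B := isCyclic_zpowers' b
  haveI hQcyc : IsCyclic (↥L ⧸ T) := by
    haveI : IsCyclic ↥(ψ.range) := Subgroup.isCyclic _
    exact isCyclic_of_surjective (MulEquiv.symm (MonoidHom.ofInjective hψinj))
      (MulEquiv.surjective _)
  obtain ⟨q, hq⟩ := IsCyclic.exists_generator (α := ↥L ⧸ T)
  obtain ⟨u, hu⟩ := QuotientGroup.mk_surjective q
  have hsurj2 : Function.Surjective
      (fun t : T => (QuotientGroup.mk (t : ↥L) : ↥L ⧸ Subgroup.zpowers u)) := by
    intro w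
    obtain ⟨x, rfl⟩ := QuotientGroup.mk_surjective w
    obtain ⟨m, hm⟩ := Subgroup.mem_zpowers_iff.mp (hq (QuotientGroup.mk x))
    have hum : (QuotientGroup.mk (u ^ m) : ↥L ⧸ T) = QuotientGroup.mk x := by
      rw [QuotientGroup.mk_zpow, hu, hm]
    have ht : x * (u ^ m)⁻¹ ∈ T := by
      rw [← QuotientGroup.eq_one_iff (N := T), QuotientGroup.mk_mul, QuotientGroup.mk_inv, hum]
      simp
    refine ⟨⟨x * (u ^ m)⁻¹, ht⟩, ?_⟩
    show (QuotientGroup.mk (x * (u ^ m)⁻¹) : ↥L ⧸ Subgroup.zpowers u) = QuotientGroup.mk x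
    refine (QuotientGroup.eq (s := Subgroup.zpowers u)).mpr ?_
    have e : (x * (u ^ m)⁻¹)⁻¹ * x = u ^ m := by group
    rw [e]
    exact Subgroup.mem_zpowers_iff.mpr ⟨m, rfl⟩
  haveI hfinQu : Finite (↥L ⧸ Subgroup.zpowers u) := Finite.of_surjective _ hsurj2
  have huindex : (Subgroup.zpowers u).index ≤ r := by
    calc (Subgroup.zpowers u).index = Nat.card (↥L ⧸ Subgroup.zpowers u) := rfl
      _ ≤ Nat.card T := Nat.card_le_card_of_surjective _ hsurj2
      _ ≤ r := hTcard
  have huindex0 : (Subgroup.zpowers u).index ≠ 0 := Subgroup.index_ne_zero_of_finite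
  -- assemble
  refine ⟨(u : H), ?_, ?_⟩ <;>
  · have hmap : Subgroup.zpowers ((u : ↥L) : H) = (Subgroup.zpowers u).map L.subtype :=
      (MonoidHom.map_zpowers L.subtype u).symm
    have hle' : Subgroup.zpowers ((u : ↥L) : H) ≤ L := by
      rw [hmap]; exact Subgroup.map_subtype_le _
    have hrel : (Subgroup.zpowers ((u : ↥L) : H)).relIndex L = (Subgroup.zpowers u).index := by
      show ((Subgroup.zpowers ((u : ↥L) : H)).subgroupOf L).index = _
      congr 1
      rw [hmap]
      exact Subgroup.comap_map_eq_self_of_injective (Subgroup.subtype_injective L) _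
    have hfin := Subgroup.relIndex_mul_index hle'
    rw [hrel] at hfin
    first
    | (rw [← hfin]; exact Nat.mul_ne_zero huindex0 hLne)
    | (rw [← hfin, Nat.mul_comm]
       calc L.index * (Subgroup.zpowers u).index ≤ 2 * r :=
          Nat.mul_le_mul hLle2 huindex
        _ = 2 * r := rfl)
/-- If every finite subgroup of `G` has order at most `r`, then every infinite
virtually cyclic subgroup `K` of `G` contains an infinite cyclic subgroup `C`
of index at most `2r` in `K`. -/
theorem stmt16 (G : Type*) [Group G] (r : ℕ) (hr : 1 ≤ r)
    (hbound : ∀ H : Subgroup G, Finite H → Nat.card H ≤ r)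
    (K : Subgroup G) (hKinf : Infinite K)
    (hKvc : ∃ C : Subgroup G, C ≤ K ∧ IsCyclic C ∧ C.relIndex K ≠ 0) :
    ∃ C : Subgroup G, C ≤ K ∧ Infinite C ∧ IsCyclic C ∧
      C.relIndex K ≠ 0 ∧ C.relIndex K ≤ 2 * r := by
  classical
  haveI := hKinf
  obtain ⟨C0, hC0K, hC0cyc, hC0rel⟩ := hKvc
  have hb : ∀ T : Subgroup ↥K, Finite T → Nat.card T ≤ r := by
    intro T hT
    have e : Nat.card T = Nat.card (T.map K.subtype) :=
      Nat.card_congr (Subgroup.equivMapOfInjective T K.subtype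
        (Subgroup.subtype_injective K)).toEquiv
    rw [e]
    exact hbound _ (Finite.of_equiv _ (Subgroup.equivMapOfInjective T K.subtype
      (Subgroup.subtype_injective K)).toEquiv)
  haveI : IsCyclic (C0.subgroupOf K) :=
    isCyclic_of_surjective ((Subgroup.subgroupOfEquivOfLe hC0K).symm) (MulEquiv.surjective _)
  obtain ⟨g, hg⟩ := IsCyclic.exists_generator (α := ↥(C0.subgroupOf K))
  have hle : C0.subgroupOf K ≤ Subgroup.zpowers (g : ↥K) := by
    intro x hx
    obtain ⟨m, hm⟩ := Subgroup.mem_zpowers_iff.mp (hg ⟨x, hx⟩)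
    exact Subgroup.mem_zpowers_iff.mpr
      ⟨m, by simpa [SubgroupClass.coe_zpow] using congrArg Subtype.val hm⟩
  have hcidx : (Subgroup.zpowers ((g : ↥K))).index ≠ 0 := by
    have hd := Subgroup.index_dvd_of_le hle
    intro h0
    rw [h0] at hd
    exact hC0rel (Nat.eq_zero_of_zero_dvd hd)
  obtain ⟨k, hk0, hk2⟩ := key_lemma r hb (g : ↥K) hcidx
  have hrel : ((Subgroup.zpowers k).map K.subtype).relIndex K = (Subgroup.zpowers k).index := by
    show (((Subgroup.zpowers k).map K.subtype).subgroupOf K).index = _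
    congr 1
    exact Subgroup.comap_map_eq_self_of_injective (Subgroup.subtype_injective K) _
  refine ⟨(Subgroup.zpowers k).map K.subtype, Subgroup.map_subtype_le _, ?_, ?_, ?_, ?_⟩
  · haveI : (Subgroup.zpowers k).FiniteIndex := ⟨hk0⟩
    haveI : Infinite (Subgroup.zpowers k) := by
      by_contra hfin
      rw [not_infinite_iff_finite] at hfin
      haveI := hfin
      haveI : Finite ↥K := Finite.of_equiv ((↥K ⧸ Subgroup.zpowers k) × (Subgroup.zpowers k))
        (Subgroup.groupEquivQuotientProdSubgroup (s := Subgroup.zpowers k)).symm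
      exact not_finite ↥K
    exact Infinite.of_injective _ (Subgroup.equivMapOfInjective (Subgroup.zpowers k) K.subtype
      (Subgroup.subtype_injective K)).toEquiv.injective
  · rw [MonoidHom.map_zpowers]
    exact isCyclic_zpowers' _
  · rw [hrel]; exact hk0
  · rw [hrel]; exact hk2
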